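/- If a sequence Z over a product alphabet A × B is (μ ⊗ ν)-normal, then its first projection π₀(Z) is μ-normal and its second projection π₁(Z) is ν-normal. -/

import Mathlib

open Filter Topology

/-- The prefix `X(0) X(1) ⋯ X(n-1)` of an infinite sequence, as a list. -/
def pref {A : Type*} (X : ℕ → A) (n : ℕ) : List A := (List.range n).map X

/-- Number of occurrences of the word `w` in the prefix `X[0..n]`
(indices `i` with `0 ≤ i ≤ n - |w| + 1`). -/
def nbocc {A : Type*} [DecidableEq A] (w : List A) (X : ℕ → A) (n : ℕ) : ℕ :=
  ((Finset.range (n + 2 - w.length)).filter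
    (fun i => (List.range w.length).map (fun j => X (i + j)) = w)).card

/-- Frequency of occurrences of `w` in `X[0..n]`. -/
noncomputable def freq {A : Type*} [DecidableEq A] (w : List A) (X : ℕ → A) (n : ℕ) : ℝ :=
  (nbocc w X n : ℝ) / ((n + 2 - w.length : ℕ) : ℝ)

/-- The Bernoulli measure of a word: product of the measures of its letters. -/
def wmeas {A : Type*} (μ : A → ℝ) (w : List A) : ℝ := (w.map μ).prod

/-- `X` is `μ`-normal: every nonempty word occurs with asymptotic frequency `μ(w)`. -/
def BNormal {A : Type*} [DecidableEq A] (μ : A → ℝ) (X : ℕ → A) : Prop :=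
  ∀ w : List A, w ≠ [] → Tendsto (fun n => freq w X n) atTop (𝓝 (wmeas μ w))

/-- Iterated transition function of a deterministic automaton. -/
def dstar {Q A : Type*} (δ : Q → A → Q) (q : Q) (w : List A) : Q := w.foldl δ q

/-- Capital of an automatic gambler started in state `q` after reading `w`. -/
def capital {Q A : Type*} (δ : Q → A → Q) (γ : Q → A → ℝ) : Q → List A → ℝ
  | _, [] => 1
  | q, a :: w => γ q a * capital δ γ (δ q a) w

/-- if `Z` over `A × B` is `(μ ⊗ ν)`-normal, then its projections are
`μ`-normal and `ν`-normal respectively. -/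
lemma range_map_eq_ofFn {α : Type*} (k : ℕ) (u : ℕ → α) :
    (List.range k).map u = List.ofFn (fun j : Fin k => u j) := by
  apply List.ext_getElem <;> simp

/-- Occurrences of `w` in the first projection split as a sum over second components. -/
lemma nbocc_proj {A B : Type*} [Fintype B] [DecidableEq A] [DecidableEq B]
    (w : List A) (Z : ℕ → A × B) (n : ℕ) :
    nbocc w (fun m => (Z m).1) n
      = ∑ f : Fin w.length → B,
          nbocc (List.ofFn (fun j => (w.get j, f j))) Z n := by
  classical
  simp only [nbocc, List.length_ofFn]
  rw [← Finset.card_biUnion]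
  · congr 1
    ext i
    simp only [Finset.mem_biUnion, Finset.mem_filter, Finset.mem_univ, true_and,
      range_map_eq_ofFn]
    constructor
    · rintro ⟨hi, hw⟩
      refine ⟨fun j => (Z (i + j)).2, hi, ?_⟩
      rw [List.ofFn_inj]
      funext j
      have : (Z (i + j)).1 = w.get j := by
        have := congrFun (List.ofFn_inj.mp (hw.trans (List.ofFn_get w).symm)) j
        exact this
      exact Prod.ext this rfl
    · rintro ⟨f, hi, hf⟩
      refine ⟨hi, ?_⟩
      have hfe := List.ofFn_inj.mp hf
      calc (List.ofFn fun j => (Z (i + j)).1)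
          = List.ofFn w.get := List.ofFn_inj.mpr
            (funext fun j => congrArg Prod.fst (congrFun hfe j))
        _ = w := List.ofFn_get w
  · intro f _ g _ hfg
    simp only [Finset.disjoint_left, Finset.mem_filter, range_map_eq_ofFn]
    rintro i ⟨hi, hf⟩ ⟨_, hg⟩
    apply hfg
    funext j
    exact congrArg Prod.snd (congrFun (List.ofFn_inj.mp (hf.symm.trans hg)) j)

lemma wmeas_eq_prod {A : Type*} (μ : A → ℝ) (w : List A) :
    wmeas μ w = ∏ j : Fin w.length, μ (w.get j) := by
  conv_lhs => rw [wmeas, ← List.ofFn_get w]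
  rw [List.map_ofFn, List.prod_ofFn]
  rfl

/-- First-projection normality. -/
lemma proj_fst_normal {A B : Type*} [Fintype A] [DecidableEq A] [Fintype B] [DecidableEq B]
    (μ : A → ℝ) (ν : B → ℝ) (hνsum : ∑ b, ν b = 1)
    (Z : ℕ → A × B)
    (hZ : BNormal (fun p : A × B => μ p.1 * ν p.2) Z) :
    BNormal μ (fun n => (Z n).1) := by
  intro w hw
  have hfreq : ∀ n, freq w (fun m => (Z m).1) n
      = ∑ f : Fin w.length → B, freq (List.ofFn (fun j => (w.get j, f j))) Z n := by
    intro n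
    simp only [freq, nbocc_proj, List.length_ofFn, Nat.cast_sum, Finset.sum_div]
  have hlim : Tendsto
      (fun n => ∑ f : Fin w.length → B, freq (List.ofFn (fun j => (w.get j, f j))) Z n)
      atTop (𝓝 (∑ f : Fin w.length → B,
        wmeas (fun p : A × B => μ p.1 * ν p.2) (List.ofFn (fun j => (w.get j, f j))))) := by
    apply tendsto_finset_sum
    intro f _
    apply hZ
    intro h
    have : w.length = 0 := by simpa using congrArg List.length h
    exact hw (List.length_eq_zero_iff.mp this)
  have hsum : (∑ f : Fin w.length → B,
      wmeas (fun p : A × B => μ p.1 * ν p.2) (List.ofFn (fun j => (w.get j, f j))))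
      = wmeas μ w := by
    have h1 : ∀ f : Fin w.length → B,
        wmeas (fun p : A × B => μ p.1 * ν p.2) (List.ofFn (fun j => (w.get j, f j)))
        = (∏ j : Fin w.length, μ (w.get j)) * ∏ j : Fin w.length, ν (f j) := by
      intro f
      rw [wmeas, List.map_ofFn, List.prod_ofFn, ← Finset.prod_mul_distrib]
      rfl
    simp only [h1, ← Finset.mul_sum]
    have h2 : ∑ f : Fin w.length → B, ∏ j : Fin w.length, ν (f j) = 1 := by
      rw [← Fintype.piFinset_univ, ← Finset.prod_univ_sum]
      simp [hνsum]
    rw [h2, mul_one, wmeas_eq_prod]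
  rw [← hsum]
  simpa only [hfreq] using hlim

/-- Transfer of normality along a bijective relabeling of the alphabet. -/
lemma BNormal_equiv {C D : Type*} [DecidableEq C] [DecidableEq D] (g : C ≃ D)
    (ξ : C → ℝ) (X : ℕ → C) (h : BNormal ξ X) :
    BNormal (fun d => ξ (g.symm d)) (fun n => g (X n)) := by
  intro w hw
  have hocc : ∀ n, nbocc w (fun m => g (X m)) n = nbocc (w.map g.symm) X n := by
    intro n
    simp only [nbocc, List.length_map]
    congr 1
    ext i
    simp only [Finset.mem_filter]
    constructor
    · rintro ⟨hi, hww⟩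
      refine ⟨hi, ?_⟩
      have := congrArg (List.map g.symm) hww
      simpa [List.map_map, Function.comp_def] using this
    · rintro ⟨hi, hww⟩
      refine ⟨hi, ?_⟩
      have := congrArg (List.map g) hww
      simpa [List.map_map, Function.comp_def] using this
  have hfreq : ∀ n, freq w (fun m => g (X m)) n = freq (w.map g.symm) X n := by
    intro n
    simp only [freq, hocc, List.length_map]
  have hmeas : wmeas (fun d => ξ (g.symm d)) w = wmeas ξ (w.map g.symm) := by
    simp [wmeas, List.map_map, Function.comp_def]
  rw [funext hfreq, hmeas]
  exact h _ (by simpa using hw)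


theorem projections_of_product_normal
    {A B : Type*} [Fintype A] [DecidableEq A] [Fintype B] [DecidableEq B]
    (μ : A → ℝ) (ν : B → ℝ) (hμpos : ∀ a, 0 < μ a) (hνpos : ∀ b, 0 < ν b)
    (hμsum : ∑ a, μ a = 1) (hνsum : ∑ b, ν b = 1)
    (Z : ℕ → A × B)
    (hZ : BNormal (fun p : A × B => μ p.1 * ν p.2) Z) :
    BNormal μ (fun n => (Z n).1) ∧ BNormal ν (fun n => (Z n).2) := by
  constructor
  · exact proj_fst_normal μ ν hνsum Z hZ
  · have h1 := BNormal_equiv (Equiv.prodComm A B)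
        (fun p : A × B => μ p.1 * ν p.2) Z hZ
    have heq : (fun d : B × A =>
        (fun p : A × B => μ p.1 * ν p.2) ((Equiv.prodComm A B).symm d))
        = fun p : B × A => ν p.1 * μ p.2 := by
      funext p; simp [mul_comm]
    rw [heq] at h1
    have h2 : BNormal (fun p : B × A => ν p.1 * μ p.2)
        (fun n => ((Z n).2, (Z n).1)) := h1
    have h3 := proj_fst_normal ν μ hμsum (fun n => ((Z n).2, (Z n).1)) h2
    exact h3
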